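/- Let f be holomorphic on 𝔻, a ∈ (0,1), λ ∈ ℂ with |λ| = 1 and λ ≠ 1, f not identically zero, and f(az + 1 - a) = λ f(z) on 𝔻. Then the radial limit lim_{r→1⁻} f(r) does not exist (as a finite limit). -/

import Mathlib

open Filter

/-- If `f ∘ φ_a = λ f` on 𝔻 with `|λ| = 1`, `λ ≠ 1`, and `f` is not identically
zero, then the radial limit of `f` at `1` does not exist. -/
theorem radial_limit_not_exists (a : ℝ) (ha : a ∈ Set.Ioo (0:ℝ) 1)
    (f : ℂ → ℂ) (lam : ℂ) (hlam : ‖lam‖ = 1) (hlam1 : lam ≠ 1)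
    (hf : DifferentiableOn ℂ f (Metric.ball (0:ℂ) 1))
    (hne : ∃ z ∈ Metric.ball (0:ℂ) 1, f z ≠ 0)
    (heq : ∀ z ∈ Metric.ball (0:ℂ) 1, f ((a:ℂ) * z + (1 - a)) = lam * f z) :
    ¬ ∃ L : ℂ, Tendsto (fun r : ℝ => f r) (nhdsWithin 1 (Set.Iio (1:ℝ))) (nhds L) := by
  obtain ⟨ha0, ha1⟩ := ha
  -- Step 1: find a real point w ∈ (-1,1) with f w ≠ 0
  have hw : ∃ w : ℝ, w ∈ Set.Ioo (-1:ℝ) 1 ∧ f w ≠ 0 := by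
    by_contra h
    push_neg at h
    have htendR : Tendsto (fun n : ℕ => (1:ℝ)/(n+2)) atTop (nhds 0) := by
      have := (tendsto_one_div_add_atTop_nhds_zero_nat (𝕜 := ℝ)).comp (tendsto_add_atTop_nat 1)
      convert this using 2 with n
      simp [Function.comp]
      ring
    have htend : Tendsto (fun n : ℕ => (((1:ℝ)/(n+2) : ℝ) : ℂ)) atTop
        (nhdsWithin (0:ℂ) {(0:ℂ)}ᶜ) := by
      apply tendsto_nhdsWithin_iff.mpr
      constructor
      · exact (Complex.continuous_ofReal.tendsto 0).comp htendR
      · filter_upwards with n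
        simp only [Set.mem_compl_iff, Set.mem_singleton_iff]
        intro hc
        have : (1:ℝ)/(n+2) = 0 := by exact_mod_cast hc
        have h2 : (0:ℝ) < (n:ℝ)+2 := by positivity
        rw [div_eq_zero_iff] at this
        rcases this with h1 | h1
        · norm_num at h1
        · linarith
    have hzero : ∃ᶠ z in nhdsWithin (0:ℂ) {(0:ℂ)}ᶜ, f z = 0 := by
      apply htend.frequently
      apply Frequently.of_forall
      intro n
      apply h
      have h2 : (0:ℝ) < (n:ℝ)+2 := by positivity
      have h3 : (0:ℝ) < 1/((n:ℝ)+2) := by positivity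
      constructor
      · linarith
      · rw [div_lt_one h2]; linarith
    have hEq := (hf.analyticOnNhd Metric.isOpen_ball).eqOn_zero_of_preconnected_of_frequently_eq_zero
      ((convex_ball (0:ℂ) 1).isPreconnected) (by norm_num) hzero
    obtain ⟨z, hz, hzne⟩ := hne
    exact hzne (hEq hz)
  obtain ⟨w, ⟨hw1, hw2⟩, hfw⟩ := hw
  rintro ⟨L, hL⟩
  set r : ℕ → ℝ := fun n => 1 - a^n * (1 - w) with hr
  have hrmem : ∀ n, r n ∈ Set.Ioo (-1:ℝ) 1 := by
    intro n
    have hp : 0 < a^n := pow_pos ha0 n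
    have hle : a^n ≤ 1 := pow_le_one₀ ha0.le ha1.le
    refine ⟨?_, ?_⟩ <;> simp only [hr] <;> nlinarith
  have hball : ∀ n, ((r n : ℝ) : ℂ) ∈ Metric.ball (0:ℂ) 1 := by
    intro n
    obtain ⟨h1, h2⟩ := hrmem n
    simp only [Metric.mem_ball, dist_zero_right, Complex.norm_real, Real.norm_eq_abs, abs_lt]
    exact ⟨h1, h2⟩
  have hfr : ∀ n, f (r n) = lam ^ n * f w := by
    intro n
    induction n with
    | zero => norm_num [hr]
    | succ n ih =>
      have hstep := heq _ (hball n)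
      have hcast : (a:ℂ) * ((r n : ℝ) : ℂ) + (1 - (a:ℂ)) = ((r (n+1) : ℝ) : ℂ) := by
        simp only [hr]
        push_cast
        ring
      rw [hcast] at hstep
      rw [hstep, ih, pow_succ]
      ring
  have hrt : Tendsto r atTop (nhdsWithin 1 (Set.Iio (1:ℝ))) := by
    apply tendsto_nhdsWithin_iff.mpr
    constructor
    · have h1 : Tendsto (fun n : ℕ => a^n) atTop (nhds 0) :=
        tendsto_pow_atTop_nhds_zero_of_lt_one ha0.le ha1
      have h2 : Tendsto (fun n : ℕ => 1 - a ^ n * (1 - w)) atTop (nhds (1 - 0 * (1 - w))) :=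
        tendsto_const_nhds.sub (h1.mul_const (1-w))
      simpa [hr] using h2
    · filter_upwards with n
      exact (hrmem n).2
  have hLim : Tendsto (fun n => lam ^ n * f w) atTop (nhds L) :=
    ((hL.comp hrt).congr fun n => hfr n)
  have hLim2 : Tendsto (fun n => lam ^ (n+1) * f w) atTop (nhds L) :=
    hLim.comp (tendsto_add_atTop_nat 1)
  have hLim3 : Tendsto (fun n => lam ^ (n+1) * f w) atTop (nhds (lam * L)) := by
    have := hLim.const_mul lam
    apply this.congr
    intro n
    rw [pow_succ]
    ring
  have hlamL : lam * L = L := tendsto_nhds_unique hLim3 hLim2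
  have hL0 : L = 0 := by
    have hz : (lam - 1) * L = 0 := by linear_combination hlamL
    rcases mul_eq_zero.mp hz with h | h
    · exact absurd (sub_eq_zero.mp h) hlam1
    · exact h
  have habs : Tendsto (fun n => ‖lam ^ n * f w‖) atTop (nhds ‖L‖) :=
    (continuous_norm.tendsto L).comp hLim
  have hconst : (fun n : ℕ => ‖lam ^ n * f w‖) = fun _ => ‖f w‖ := by
    funext n
    simp [norm_mul, norm_pow, hlam]
  rw [hconst] at habs
  have : ‖f w‖ = ‖L‖ := tendsto_nhds_unique tendsto_const_nhds habs
  rw [hL0, norm_zero] at this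
  exact hfw (norm_eq_zero.mp this)
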